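/- If A ∈ ℤ^{n×d} is totally unimodular and b ∈ ℤⁿ, then the polyhedron P = {y ∈ ℝᵈ : Ay ≤ b, 0 ≤ y ≤ 1} is integral: every vertex (extreme point) of P has all coordinates in {0, 1}. Consequently, for any linear objective c ∈ ℝᵈ, if P is nonempty then the minimum of cᵀy over P is attained at a point of {0,1}ᵈ ∩ P. -/

import Mathlib

open Matrix

lemma mem01_mul {a b : ℝ} (ha : a ∈ ({0,1,-1} : Set ℝ)) (hb : b ∈ ({0,1,-1} : Set ℝ)) :
    a * b ∈ ({0,1,-1} : Set ℝ) := by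
  rcases ha with rfl|rfl|rfl <;> rcases hb with rfl|rfl|rfl <;> simp

lemma neg_one_pow_mem (m : ℕ) : ((-1:ℝ)^m) ∈ ({0,1,-1} : Set ℝ) := by
  rcases Nat.even_or_odd m with h|h
  · right; left; exact h.neg_one_pow
  · right; right; exact h.neg_one_pow

lemma det_pattern {n d : ℕ} (A : Matrix (Fin n) (Fin d) ℝ)
    (hTU : ∀ (k : ℕ) (r : Fin k → Fin n) (c : Fin k → Fin d),
      Function.Injective r → Function.Injective c →
      (A.submatrix r c).det ∈ ({0, 1, -1} : Set ℝ)) :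
    ∀ (k : ℕ) (c : Fin k → Fin d), Function.Injective c →
      ∀ M : Matrix (Fin k) (Fin k) ℝ,
      (∀ i, (∃ r, ∀ j, M i j = A r (c j)) ∨
        (∃ j₀, (∀ j, j ≠ j₀ → M i j = 0) ∧ M i j₀ ∈ ({0,1,-1} : Set ℝ))) →
      M.det ∈ ({0,1,-1} : Set ℝ) := by
  intro k
  induction k with
  | zero => intro c hc M hM; simp [Matrix.det_fin_zero]
  | succ k IH =>
    intro c hc M hM
    by_cases hB : ∃ i j₀, (∀ j, j ≠ j₀ → M i j = 0) ∧ M i j₀ ∈ ({0,1,-1} : Set ℝ)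
    · obtain ⟨i, j₀, hz, hs⟩ := hB
      rw [Matrix.det_succ_row M i]
      rw [Finset.sum_eq_single j₀]
      · refine mem01_mul (mem01_mul (neg_one_pow_mem _) hs) ?_
        refine IH (c ∘ j₀.succAbove) (hc.comp (Fin.succAbove_right_injective)) _ ?_
        intro i'
        rcases hM (i.succAbove i') with ⟨r, hr⟩ | ⟨j₁, hz', hs'⟩
        · exact Or.inl ⟨r, fun j => hr _⟩
        · by_cases hj : j₁ = j₀
          · subst hj
            refine Or.inr ⟨i', fun j _ => hz' _ (Fin.succAbove_ne _ _), ?_⟩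
            simp only [Matrix.submatrix_apply]
            rw [hz' _ (Fin.succAbove_ne _ _)]; left; rfl
          · obtain ⟨j', rfl⟩ := Fin.exists_succAbove_eq hj
            refine Or.inr ⟨j', fun j hjj => ?_, hs'⟩
            exact hz' _ fun h => hjj (Fin.succAbove_right_injective h)
      · intro j _ hj
        rw [hz j hj]; ring
      · simp
    · push_neg at hB
      have : ∀ i, ∃ r, ∀ j, M i j = A r (c j) := by
        intro i
        rcases hM i with h | ⟨j₀, hz, hs⟩
        · exact h
        · exact absurd hs (hB i j₀ hz)
      choose r hr using this
      have hMr : M = A.submatrix r c := by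
        ext i j; exact hr i j
      by_cases hri : Function.Injective r
      · rw [hMr]; exact hTU _ r c hri hc
      · rw [Function.not_injective_iff] at hri
        obtain ⟨i, i', hii, hne⟩ := hri
        rw [Matrix.det_zero_of_row_eq hne]
        · left; rfl
        · funext j; rw [hr, hr, hii]


lemma int_det {k : ℕ} (M : Matrix (Fin k) (Fin k) ℝ) (h : ∀ i j, ∃ m : ℤ, M i j = m) :
    ∃ m : ℤ, M.det = m := by
  choose N hN using h
  refine ⟨(Matrix.of N).det, ?_⟩
  have h2 := RingHom.map_det (Int.castRingHom ℝ) (Matrix.of N)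
  have h3 : ((of N).det : ℝ) = ((Int.castRingHom ℝ).mapMatrix (Matrix.of N)).det := h2
  rw [h3]
  congr 1
  ext i j
  simp [hN]


lemma tu_extreme_zero_one {n d : ℕ} (A : Matrix (Fin n) (Fin d) ℝ)
    (hTU : ∀ (k : ℕ) (r : Fin k → Fin n) (c : Fin k → Fin d),
      Function.Injective r → Function.Injective c →
      (A.submatrix r c).det ∈ ({0, 1, -1} : Set ℝ))
    (b : Fin n → ℤ) (y : Fin d → ℝ)
    (hy : y ∈ Set.extremePoints ℝ
      {y : Fin d → ℝ | (∀ i, A.mulVec y i ≤ (b i : ℝ)) ∧ ∀ j, 0 ≤ y j ∧ y j ≤ 1}) :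
    ∀ j, y j = 0 ∨ y j = 1 := by
  classical
  rw [mem_extremePoints] at hy
  obtain ⟨⟨hyA, hybox⟩, hext⟩ := hy
  set S : Set (Fin d → ℝ) :=
    {w | (∃ i, A.mulVec y i = (b i : ℝ) ∧ w = A i) ∨
      ∃ j, (y j = 0 ∨ y j = 1) ∧ w = Pi.single j 1} with hSdef
  have hspan : Submodule.span ℝ S = ⊤ := by
    by_contra hne
    obtain ⟨φ, hφne, hφ⟩ :=
      Submodule.exists_dual_map_eq_bot_of_lt_top (lt_top_iff_ne_top.2 hne) inferInstance
    set v : Fin d → ℝ := fun j => φ (fun j' => if j = j' then 1 else 0) with hvdef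
    have hφeq : ∀ x : Fin d → ℝ, φ x = x ⬝ᵥ v := by
      intro x
      rw [LinearMap.pi_apply_eq_sum_univ φ x]
      simp [dotProduct, hvdef, smul_eq_mul]
    have hvne : v ≠ 0 := by
      intro h0
      apply hφne
      apply LinearMap.ext; intro x
      rw [hφeq x, h0]
      simp [dotProduct]
    have hSdot : ∀ w ∈ S, w ⬝ᵥ v = 0 := by
      intro w hw
      rw [← hφeq]
      have : φ w ∈ Submodule.map φ (Submodule.span ℝ S) :=
        Submodule.mem_map_of_mem (Submodule.subset_span hw)
      rw [hφ] at this
      simpa using this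
    -- tight rows orthogonal to v
    have hA0 : ∀ i, A.mulVec y i = (b i : ℝ) → A i ⬝ᵥ v = 0 := fun i hi =>
      hSdot (A i) (Or.inl ⟨i, hi, rfl⟩)
    have hv0 : ∀ j, (y j = 0 ∨ y j = 1) → v j = 0 := by
      intro j hj
      have := hSdot (Pi.single j 1) (Or.inr ⟨j, hj, rfl⟩)
      simpa [dotProduct, Pi.single_apply] using this
    -- build epsilon
    set ε₁ : Fin n → ℝ := fun i =>
      if A.mulVec y i = (b i : ℝ) then 1 else ((b i : ℝ) - A.mulVec y i) / (|A i ⬝ᵥ v| + 1) with hε₁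
    set ε₂ : Fin d → ℝ := fun j =>
      if v j = 0 then 1 else min (y j) (1 - y j) / (|v j| + 1) with hε₂
    set Q : Finset ℝ := insert 1 (Finset.univ.image ε₁ ∪ Finset.univ.image ε₂) with hQ
    have hQne : Q.Nonempty := ⟨1, by simp [hQ]⟩
    set ε : ℝ := Q.min' hQne with hε
    have hQpos : ∀ q ∈ Q, 0 < q := by
      intro q hq
      simp only [hQ, Finset.mem_insert, Finset.mem_union, Finset.mem_image] at hq
      rcases hq with rfl | ⟨i, -, rfl⟩ | ⟨j, -, rfl⟩
      · norm_num
      · by_cases h : A.mulVec y i = (b i : ℝ)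
        · simp only [hε₁, h, if_true]; norm_num
        · simp only [hε₁, h, if_false]
          apply div_pos (sub_pos.2 (lt_of_le_of_ne (hyA i) h)) (by positivity)
      · by_cases h : v j = 0
        · simp only [hε₂, h, if_true]; norm_num
        · simp only [hε₂, h, if_false]
          have hy0 : y j ≠ 0 := fun h0 => h (hv0 j (Or.inl h0))
          have hy1 : y j ≠ 1 := fun h0 => h (hv0 j (Or.inr h0))
          have h0 : 0 < y j := lt_of_le_of_ne (hybox j).1 (Ne.symm hy0)
          have h1 : y j < 1 := lt_of_le_of_ne (hybox j).2 hy1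
          apply div_pos (lt_min h0 (by linarith)) (by positivity)
    have hεpos : 0 < ε := hQpos _ (Q.min'_mem hQne)
    have hεle₁ : ∀ i, ε ≤ ε₁ i := fun i => Finset.min'_le _ _ (by
      simp only [hQ, Finset.mem_insert, Finset.mem_union, Finset.mem_image]
      exact Or.inr (Or.inl ⟨i, Finset.mem_univ _, rfl⟩))
    have hεle₂ : ∀ j, ε ≤ ε₂ j := fun j => Finset.min'_le _ _ (by
      simp only [hQ, Finset.mem_insert, Finset.mem_union, Finset.mem_image]
      exact Or.inr (Or.inr ⟨j, Finset.mem_univ _, rfl⟩))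
    have hrow : ∀ (t : ℝ) i, A.mulVec (y + t • v) i = A.mulVec y i + t * (A i ⬝ᵥ v) := by
      intro t i
      simp only [Matrix.mulVec, dotProduct, Pi.add_apply, Pi.smul_apply, smul_eq_mul,
        mul_add, Finset.sum_add_distrib, Finset.mul_sum]
      congr 1
      apply Finset.sum_congr rfl; intro j _; ring
    have hmemP : ∀ t : ℝ, |t| ≤ ε →
        ((∀ i, A.mulVec (y + t • v) i ≤ (b i : ℝ)) ∧ ∀ j, 0 ≤ (y + t • v) j ∧ (y + t • v) j ≤ 1) := by
      intro t ht
      constructor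
      · intro i
        rw [hrow]
        by_cases hi : A.mulVec y i = (b i : ℝ)
        · rw [hA0 i hi, mul_zero, add_zero, hi]
        · have hslack : 0 < (b i : ℝ) - A.mulVec y i := sub_pos.2 (lt_of_le_of_ne (hyA i) hi)
          have h1 : t * (A i ⬝ᵥ v) ≤ |t| * |A i ⬝ᵥ v| := le_trans (le_abs_self _) (le_of_eq (abs_mul _ _))
          have h2 : |t| * |A i ⬝ᵥ v| ≤ ε₁ i * |A i ⬝ᵥ v| :=
            mul_le_mul_of_nonneg_right (le_trans ht (hεle₁ i)) (abs_nonneg _)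
          have h3 : ε₁ i * |A i ⬝ᵥ v| < (b i : ℝ) - A.mulVec y i := by
            simp only [hε₁, hi, if_false]
            rw [div_mul_eq_mul_div, div_lt_iff₀ (by positivity)]
            nlinarith [abs_nonneg (A i ⬝ᵥ v)]
          linarith
      · intro j
        have hyj := hybox j
        by_cases hvj : v j = 0
        · simpa [hvj] using hyj
        · have hy0 : y j ≠ 0 := fun h0 => hvj (hv0 j (Or.inl h0))
          have hy1 : y j ≠ 1 := fun h0 => hvj (hv0 j (Or.inr h0))
          have h0 : 0 < y j := lt_of_le_of_ne hyj.1 (Ne.symm hy0)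
          have h1 : y j < 1 := lt_of_le_of_ne hyj.2 hy1
          have hbound : |t * v j| < min (y j) (1 - y j) := by
            rw [abs_mul]
            calc |t| * |v j| ≤ ε₂ j * |v j| :=
                  mul_le_mul_of_nonneg_right (le_trans ht (hεle₂ j)) (abs_nonneg _)
              _ < min (y j) (1 - y j) := by
                  simp only [hε₂, hvj, if_false]
                  rw [div_mul_eq_mul_div, div_lt_iff₀ (by positivity)]
                  have habs : 0 < |v j| := abs_pos.2 hvj
                  have hmin : 0 < min (y j) (1 - y j) := lt_min h0 (by linarith)
                  nlinarith
          have h2 := abs_lt.1 hbound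
          have hm1 : min (y j) (1 - y j) ≤ y j := min_le_left _ _
          have hm2 : min (y j) (1 - y j) ≤ 1 - y j := min_le_right _ _
          constructor
          · simp only [Pi.add_apply, Pi.smul_apply, smul_eq_mul]; linarith [h2.1]
          · simp only [Pi.add_apply, Pi.smul_apply, smul_eq_mul]; linarith [h2.2]
    have hx₁ := hmemP ε (le_of_eq (abs_of_pos hεpos))
    have hx₂ := hmemP (-ε) (le_of_eq (by rw [abs_neg, abs_of_pos hεpos]))
    have hseg : y ∈ openSegment ℝ (y + ε • v) (y + (-ε) • v) := by
      refine ⟨1/2, 1/2, by norm_num, by norm_num, by norm_num, ?_⟩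
      module
    obtain ⟨h1, -⟩ := hext _ hx₁ _ hx₂ hseg
    have hε0 : ε • v = 0 := by
      have := h1
      rwa [add_eq_left] at this
    rcases smul_eq_zero.1 hε0 with h | h
    · exact absurd h (ne_of_gt hεpos)
    · exact hvne h
  obtain ⟨tS, htsub, htspan, htli⟩ := exists_linearIndependent ℝ S
  rw [hspan] at htspan
  have htfin : tS.Finite := htli.setFinite
  haveI := htfin.fintype
  have hbas : Module.Basis tS ℝ (Fin d → ℝ) :=
    Module.Basis.mk htli (by rw [Subtype.range_coe, htspan])
  have hcard : Fintype.card tS = d := by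
    have h1 := Module.finrank_eq_card_basis hbas
    rw [Module.finrank_fin_fun ℝ] at h1
    exact h1.symm
  have e : tS ≃ Fin d := Fintype.equivFinOfCardEq hcard
  set M : Matrix (Fin d) (Fin d) ℝ := Matrix.of fun i j => (e.symm i : Fin d → ℝ) j with hM
  have hrowS : ∀ i, (M i : Fin d → ℝ) ∈ S := by
    intro i
    have : (M i : Fin d → ℝ) = (e.symm i : Fin d → ℝ) := rfl
    rw [this]
    exact htsub (e.symm i).2
  -- det nonzero
  have hli : LinearIndependent ℝ (fun i => M i) := by
    have := htli.comp e.symm e.symm.injective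
    exact this
  have hdet_ne : M.det ≠ 0 := by
    have hu := Matrix.linearIndependent_rows_iff_isUnit.1 hli
    exact (Matrix.isUnit_iff_isUnit_det M).1 hu |>.ne_zero
  -- det in {0,1,-1}
  have hdetmem : M.det ∈ ({0,1,-1} : Set ℝ) := by
    refine det_pattern A hTU d id Function.injective_id M ?_
    intro i
    rcases hSdef ▸ hrowS i with ⟨i₀, -, hw⟩ | ⟨j₀, -, hw⟩
    · exact Or.inl ⟨i₀, fun j => by rw [show M i j = (M i : Fin d → ℝ) j from rfl, hw]; rfl⟩
    · refine Or.inr ⟨j₀, fun j hj => ?_, ?_⟩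
      · rw [show M i j = (M i : Fin d → ℝ) j from rfl, hw, Pi.single_eq_of_ne hj]
      · rw [show M i j₀ = (M i : Fin d → ℝ) j₀ from rfl, hw, Pi.single_eq_same]
        right; left; rfl
  have hdet : M.det = 1 ∨ M.det = -1 := by
    rcases hdetmem with h | h | h
    · exact absurd h hdet_ne
    · exact Or.inl h
    · exact Or.inr h
  -- integer entries
  have hAint : ∀ i j, ∃ m : ℤ, A i j = m := by
    intro i j
    have := hTU 1 (fun _ => i) (fun _ => j)
      (Function.injective_of_subsingleton _) (Function.injective_of_subsingleton _)
    rw [Matrix.det_fin_one] at this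
    rcases this with h | h | h
    · exact ⟨0, by simpa using h⟩
    · exact ⟨1, by simpa using h⟩
    · exact ⟨-1, by push_cast; simpa using h⟩
  have hMint : ∀ i j, ∃ m : ℤ, M i j = m := by
    intro i j
    rcases hSdef ▸ hrowS i with ⟨i₀, -, hw⟩ | ⟨j₀, -, hw⟩
    · have : M i j = A i₀ j := by rw [show M i j = (M i : Fin d → ℝ) j from rfl, hw]
      rw [this]; exact hAint i₀ j
    · have : M i j = (Pi.single j₀ 1 : Fin d → ℝ) j := by rw [show M i j = (M i : Fin d → ℝ) j from rfl, hw]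
      rw [this]
      by_cases hj : j = j₀
      · subst hj; exact ⟨1, by simp⟩
      · exact ⟨0, by simp [Pi.single_eq_of_ne hj]⟩
  have htvec : ∀ i, ∃ m : ℤ, (M.mulVec y) i = m := by
    intro i
    have hi : (M.mulVec y) i = (M i : Fin d → ℝ) ⬝ᵥ y := rfl
    rcases hSdef ▸ hrowS i with ⟨i₀, ht, hw⟩ | ⟨j₀, hj01, hw⟩
    · refine ⟨b i₀, ?_⟩
      rw [hi, hw]
      exact ht
    · refine ⟨if y j₀ = 0 then 0 else 1, ?_⟩
      rw [hi, hw]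
      have : Pi.single j₀ (1:ℝ) ⬝ᵥ y = y j₀ := by
        simp [dotProduct, Pi.single_apply]
      rw [this]
      rcases hj01 with h | h
      · simp [h]
      · rcases eq_or_ne (y j₀) 0 with h0 | h0 <;> simp [h, h0]
  -- Cramer
  have hcram : M.det • y = Matrix.cramer M (M.mulVec y) := by
    rw [Matrix.cramer_eq_adjugate_mulVec, Matrix.mulVec_mulVec, Matrix.adjugate_mul,
      Matrix.smul_mulVec, Matrix.one_mulVec]
  intro j
  have hint : ∃ m : ℤ, M.det * y j = m := by
    have h1 : M.det * y j = (M.updateCol j (M.mulVec y)).det := by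
      have := congrFun hcram j
      simpa [Matrix.cramer_apply] using this
    rw [h1]
    apply int_det
    intro i j'
    rw [Matrix.updateCol_apply]
    by_cases h : j' = j
    · simp only [h, if_true]; exact htvec i
    · simp only [h, if_false]; exact hMint i j'
  obtain ⟨m, hm⟩ := hint
  obtain ⟨m', hm'⟩ : ∃ m' : ℤ, y j = (m' : ℝ) := by
    rcases hdet with h | h
    · exact ⟨m, by rw [h, one_mul] at hm; exact hm⟩
    · refine ⟨-m, ?_⟩
      rw [h] at hm
      push_cast
      linarith
  have hb0 := (hybox j).1
  have hb1 := (hybox j).2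
  rw [hm'] at hb0 hb1 ⊢
  have h0 : (0:ℤ) ≤ m' := by exact_mod_cast hb0
  have h1 : m' ≤ 1 := by exact_mod_cast hb1
  have : m' = 0 ∨ m' = 1 := by omega
  rcases this with rfl | rfl <;> norm_num

/-- if `A` is totally unimodular and `b` is integral, then
`P = {y : Ay ≤ b, 0 ≤ y ≤ 1}` has all its extreme points in `{0,1}ᵈ`, and any linear
objective attains its minimum over a nonempty `P` at a point of `{0,1}ᵈ ∩ P`. -/
theorem tu_polyhedron_integral {n d : ℕ}
    (A : Matrix (Fin n) (Fin d) ℝ)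
    (hTU : ∀ (k : ℕ) (r : Fin k → Fin n) (c : Fin k → Fin d),
      Function.Injective r → Function.Injective c →
      (A.submatrix r c).det ∈ ({0, 1, -1} : Set ℝ))
    (b : Fin n → ℤ) :
    let P : Set (Fin d → ℝ) :=
      {y | (∀ i, A.mulVec y i ≤ (b i : ℝ)) ∧ ∀ j, 0 ≤ y j ∧ y j ≤ 1}
    (∀ y ∈ Set.extremePoints ℝ P, ∀ j, y j = 0 ∨ y j = 1) ∧
      ∀ c : Fin d → ℝ, P.Nonempty →
        ∃ y ∈ P, (∀ j, y j = 0 ∨ y j = 1) ∧ ∀ z ∈ P, c ⬝ᵥ y ≤ c ⬝ᵥ z := by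
  intro P
  classical
  have part1 : ∀ y ∈ Set.extremePoints ℝ P, ∀ j, y j = 0 ∨ y j = 1 :=
    fun y hy => tu_extreme_zero_one A hTU b y hy
  refine ⟨part1, ?_⟩
  intro c hne
  classical
  have hP : P = {y : Fin d → ℝ | (∀ i, A.mulVec y i ≤ (b i : ℝ)) ∧ ∀ j, 0 ≤ y j ∧ y j ≤ 1} := rfl
  have hcontrow : ∀ i, Continuous (fun y : Fin d → ℝ => A.mulVec y i) := by
    intro i
    simp only [Matrix.mulVec, dotProduct]
    exact continuous_finset_sum _ fun j _ => continuous_const.mul (continuous_apply j)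
  have hcontc : Continuous (fun y : Fin d → ℝ => c ⬝ᵥ y) := by
    simp only [dotProduct]
    exact continuous_finset_sum _ fun j _ => continuous_const.mul (continuous_apply j)
  have hPeq : P = (⋂ i, {y : Fin d → ℝ | A.mulVec y i ≤ (b i : ℝ)}) ∩
      ⋂ j, ({y : Fin d → ℝ | 0 ≤ y j} ∩ {y | y j ≤ 1}) := by
    ext y
    simp [hP, Set.mem_iInter, forall_and]
  have hPclosed : IsClosed P := by
    rw [hPeq]
    exact IsClosed.inter
      (isClosed_iInter fun i => isClosed_le (hcontrow i) continuous_const)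
      (isClosed_iInter fun j => IsClosed.inter
        (isClosed_le continuous_const (continuous_apply j))
        (isClosed_le (continuous_apply j) continuous_const))
  have hPsub : P ⊆ Set.Icc (0 : Fin d → ℝ) 1 := by
    rintro y ⟨-, h2⟩
    exact ⟨fun j => (h2 j).1, fun j => (h2 j).2⟩
  have hPcomp : IsCompact P := IsCompact.of_isClosed_subset isCompact_Icc hPclosed hPsub
  -- dot product linearity helper
  have hdotlin : ∀ (w : Fin d → ℝ) (a b : ℝ) (x₁ x₂ : Fin d → ℝ),
      w ⬝ᵥ (a • x₁ + b • x₂) = a * (w ⬝ᵥ x₁) + b * (w ⬝ᵥ x₂) := by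
    intro w a b x₁ x₂
    simp only [dotProduct, Pi.add_apply, Pi.smul_apply, smul_eq_mul, mul_add,
      Finset.sum_add_distrib, Finset.mul_sum]
    congr 1 <;> (apply Finset.sum_congr rfl; intro j _; ring)
  have hPconv : Convex ℝ P := by
    rintro x₁ ⟨hx1A, hx1b⟩ x₂ ⟨hx2A, hx2b⟩ a b' ha hb hab
    constructor
    · intro i
      have : A.mulVec (a • x₁ + b' • x₂) i = a * A.mulVec x₁ i + b' * A.mulVec x₂ i :=
        hdotlin (A i) a b' x₁ x₂
      rw [this]
      calc a * A.mulVec x₁ i + b' * A.mulVec x₂ i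
          ≤ a * (b i : ℝ) + b' * (b i : ℝ) := by
            apply add_le_add (mul_le_mul_of_nonneg_left (hx1A i) ha)
              (mul_le_mul_of_nonneg_left (hx2A i) hb)
        _ = (b i : ℝ) := by rw [← add_mul, hab, one_mul]
    · intro j
      have h1 := hx1b j
      have h2 := hx2b j
      simp only [Pi.add_apply, Pi.smul_apply, smul_eq_mul]
      constructor
      · nlinarith
      · nlinarith
  obtain ⟨y₀, hy₀P, hy₀min⟩ := hPcomp.exists_isMinOn hne hcontc.continuousOn
  set m : ℝ := c ⬝ᵥ y₀ with hm
  set F : Set (Fin d → ℝ) := {z ∈ P | c ⬝ᵥ z = m} with hF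
  have hFne : F.Nonempty := ⟨y₀, hy₀P, rfl⟩
  have hFcomp : IsCompact F := by
    have : F = P ∩ {z | c ⬝ᵥ z = m} := rfl
    rw [this]
    exact hPcomp.inter_right (isClosed_eq hcontc continuous_const)
  have hmin : ∀ z ∈ P, m ≤ c ⬝ᵥ z := fun z hz => hy₀min hz
  obtain ⟨x, hxF⟩ := hFcomp.extremePoints_nonempty hFne
  rw [mem_extremePoints] at hxF
  obtain ⟨⟨hxP, hxm⟩, hxext⟩ := hxF
  have hxPe : x ∈ Set.extremePoints ℝ P := by
    rw [mem_extremePoints]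
    refine ⟨hxP, ?_⟩
    intro x₁ hx₁ x₂ hx₂ hseg
    have hseg' := hseg
    obtain ⟨a, b', ha, hb, hab, hsum⟩ := hseg
    have hcx : c ⬝ᵥ x = a * (c ⬝ᵥ x₁) + b' * (c ⬝ᵥ x₂) := by
      rw [← hsum, hdotlin]
    have h1 := hmin x₁ hx₁
    have h2 := hmin x₂ hx₂
    have heq : m = a * (c ⬝ᵥ x₁) + b' * (c ⬝ᵥ x₂) := by rw [← hxm, hcx]
    have habm : (a + b') * m = m := by rw [hab, one_mul]
    have he1 : c ⬝ᵥ x₁ = m := by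
      by_contra hne'
      have hlt : m < c ⬝ᵥ x₁ := lt_of_le_of_ne h1 (Ne.symm hne')
      nlinarith [mul_pos ha (sub_pos.2 hlt), mul_nonneg hb.le (sub_nonneg.2 h2), habm]
    have he2 : c ⬝ᵥ x₂ = m := by
      by_contra hne'
      have hlt : m < c ⬝ᵥ x₂ := lt_of_le_of_ne h2 (Ne.symm hne')
      nlinarith [mul_pos hb (sub_pos.2 hlt), mul_nonneg ha.le (sub_nonneg.2 h1), habm]
    exact hxext x₁ ⟨hx₁, he1⟩ x₂ ⟨hx₂, he2⟩ hseg'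
  exact ⟨x, hxP, part1 x hxPe, fun z hz => hxm ▸ hmin z hz⟩
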